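/- Let $(\lambda_m)_{m \ge 1}$ be real numbers and $r \in (0,1)$, $\rho \in (0,1)$, $M > 0$ with $|\lambda_m^2 - \frac{r^{2m}}{4}| < \sqrt{m}\,\rho^m(1-r^2)M$ for all $m \ge 1$. Given $\epsilon > 0$, if $m_1$ satisfies $\sqrt{m}\,\rho^m(1-r^2)M < \epsilon/2$ for all $m \ge m_1$, and if $r$ is close enough to $1$ that $\frac{1}{4} - \frac{r^{2m_1}}{4} < \frac{\epsilon}{4}$ and $\frac{1-r^2}{4} < \frac{\epsilon}{4}$, then for every $\mu \in [0, 1/4]$ there exists $m \ge 1$ with $|\mu - \lambda_m^2| < \epsilon$. -/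
import Mathlib


theorem squared_eigenvalues_eps_net
    (r ρ M ε : ℝ) (hr : r ∈ Set.Ioo (0:ℝ) 1) (hρ : ρ ∈ Set.Ioo (0:ℝ) 1)
    (hM : 0 < M) (hε : 0 < ε) (lam : ℕ → ℝ)
    (hlam : ∀ m, 1 ≤ m → |(lam m) ^ 2 - r ^ (2 * m) / 4| < Real.sqrt (m : ℝ) * ρ ^ m * (1 - r ^ 2) * M)
    (m₁ : ℕ) (hm₁ : 1 ≤ m₁)
    (hsmall : ∀ m ≥ m₁, Real.sqrt (m : ℝ) * ρ ^ m * (1 - r ^ 2) * M < ε / 2)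
    (hr1 : 1 / 4 - r ^ (2 * m₁) / 4 < ε / 4)
    (hr2 : (1 - r ^ 2) / 4 < ε / 4) :
    ∀ μ ∈ Set.Icc (0:ℝ) (1/4), ∃ m : ℕ, 1 ≤ m ∧ |μ - (lam m) ^ 2| < ε := by
  classical
  obtain ⟨hr0, hrlt⟩ := hr
  intro μ hμ
  obtain ⟨hμ0, hμ4⟩ := hμ
  have hex : ∃ k, m₁ ≤ k ∧ r ^ (2 * k) / 4 < μ + ε / 4 := by
    obtain ⟨n, hn⟩ := exists_pow_lt_of_lt_one (by linarith : (0:ℝ) < ε) hrlt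
    refine ⟨max m₁ n, le_max_left _ _, ?_⟩
    have h1 : r ^ (2 * max m₁ n) ≤ r ^ n :=
      pow_le_pow_of_le_one hr0.le hrlt.le (by omega)
    linarith
  set m := Nat.find hex with hmdef
  obtain ⟨hmm₁, hlt⟩ := Nat.find_spec hex
  have key : |μ - r ^ (2 * m) / 4| < ε / 4 := by
    rw [abs_sub_lt_iff]
    rcases eq_or_lt_of_le hmm₁ with heq | hgt
    · have he : r ^ (2 * m) = r ^ (2 * m₁) := by rw [hmdef, ← heq]
      constructor <;> linarith
    · have hnot := Nat.find_min hex (show m - 1 < m by omega)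
      push_neg at hnot
      have h2 : μ + ε / 4 ≤ r ^ (2 * (m - 1)) / 4 := hnot (by omega)
      have he : r ^ (2 * m) = r ^ (2 * (m - 1)) * r ^ 2 := by
        rw [← pow_add]; congr 1; omega
      have hle1 : r ^ (2 * (m - 1)) ≤ 1 := pow_le_one₀ hr0.le hrlt.le
      have hnn : (0:ℝ) ≤ r ^ (2 * (m - 1)) := pow_nonneg hr0.le _
      have hgap : r ^ (2 * (m - 1)) - r ^ (2 * m) ≤ 1 - r ^ 2 := by
        rw [he]; nlinarith
      constructor <;> linarith
  have hl : |lam m ^ 2 - r ^ (2 * m) / 4| < ε / 2 :=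
    (hlam m (le_trans hm₁ hmm₁)).trans (hsmall m hmm₁)
  obtain ⟨hk1, hk2⟩ := abs_sub_lt_iff.mp key
  obtain ⟨hl1, hl2⟩ := abs_lt.mp hl
  exact ⟨m, le_trans hm₁ hmm₁, by rw [abs_sub_lt_iff]; constructor <;> linarith⟩
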